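/- Let (w(s,t)) be doubly-indexed indeterminates and let x, y satisfy yx = w(1,1)xy + 1, x·w(s,t) = w(s+1,t)·x, y·w(s,t) = w(s,t+1)·y. For a word α in x, y with m x's and n y's, let B_α be the Ferrers board outlined by α (x = east step, y = north step), and define the weighted rook polynomial r_k(w; B) = Σ_{P ∈ 𝒩_k(B)} ∏_{(s,t) ∈ U_B(P)} w(s − r_{P,(s,t)}, t), where 𝒩_k(B) is the set of placements of k nonattacking rooks on B, U_B(P) is the set of cells of B not containing a rook and not cancelled by any rook (a rook cancels all cells to its right in its row and all cells below it in its column), and r_{P,(s,t)} is the number of rooks strictly north-west of (s,t). Then the normally ordered form of α is α = Σ_{k=0}^{min(m,n)} r_k(w; B_α) x^{m-k} y^{n-k}. -/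

import Mathlib

/-- The column heights of the Ferrers board outlined by a word (`true` = east step `x`,
`false` = north step `y`): the height of the `i`-th column is the number of `y`'s
preceding the `i`-th `x`. The second argument accumulates the number of `y`'s read so far. -/
def colHeights : List Bool → ℕ → List ℕ
  | [], _ => []
  | true :: r, t => t :: colHeights r t
  | false :: r, t => colHeights r (t + 1)

/-- The Ferrers board `B_α` outlined by the word `α`, as a finite set of cells `(i,j)`
(column `i ≥ 1` from the left, row `j ≥ 1` from the bottom, `j` at most the height of
column `i`). -/
def boardOf (α : List Bool) : Finset (ℕ × ℕ) :=
  ((Finset.range α.length ×ˢ Finset.range α.length).filter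
    (fun c => c.2 < (colHeights α 0).getD c.1 0)).image (fun c => (c.1 + 1, c.2 + 1))

/-- The set `𝒩_k(B)` of placements of `k` nonattacking rooks on the board `B` (no two
rooks in the same row or column). -/
def placements (B : Finset (ℕ × ℕ)) (k : ℕ) : Finset (Finset (ℕ × ℕ)) :=
  B.powerset.filter (fun P => P.card = k ∧
    ∀ c ∈ P, ∀ d ∈ P, c ≠ d → c.1 ≠ d.1 ∧ c.2 ≠ d.2)

/-- The set `U_B(P)` of cells of `B` not containing a rook of `P` and not cancelled by any
rook of `P`: a rook cancels all cells strictly to its right in its row and all cells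
strictly below it in its column. -/
def uncancelled (B P : Finset (ℕ × ℕ)) : Finset (ℕ × ℕ) :=
  B.filter (fun c => c ∉ P ∧
    ∀ r ∈ P, ¬(r.2 = c.2 ∧ r.1 < c.1) ∧ ¬(r.1 = c.1 ∧ c.2 < r.2))

/-- `r_{P,(s,t)}`: the number of rooks of `P` strictly north-west of the cell `(s,t)`. -/
def nwCount (P : Finset (ℕ × ℕ)) (c : ℕ × ℕ) : ℕ :=
  (P.filter (fun r => r.1 < c.1 ∧ c.2 < r.2)).card

/-- The weighted rook polynomial
`r_k(w;B) = ∑_{P ∈ 𝒩_k(B)} ∏_{(s,t) ∈ U_B(P)} w(s − r_{P,(s,t)}, t)`. -/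
def rookPoly {A : Type*} [CommRing A] (w : ℕ → ℕ → A) (B : Finset (ℕ × ℕ)) (k : ℕ) : A :=
  ∑ P ∈ placements B k, ∏ c ∈ uncancelled B P, w (c.1 - nwCount P c) c.2

/-- Normal ordering in the weight-dependent Weyl algebra: for `x`, `y` satisfying
`yx = w(1,1)xy + 1`, `x·w(s,t) = w(s+1,t)·x`, `y·w(s,t) = w(s,t+1)·y` (the weights
`w(s,t)` generating a commutative ring `A` mapped into `R` by `ι`), every word `α`
with `m` `x`'s and `n` `y`'s satisfies
`α = ∑_{k=0}^{min(m,n)} r_k(w;B_α) x^{m-k} y^{n-k}`. -/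
-- ## basic membership lemmas

lemma mem_placements {B : Finset (ℕ × ℕ)} {k : ℕ} {P : Finset (ℕ × ℕ)} :
    P ∈ placements B k ↔ P ⊆ B ∧ P.card = k ∧
      ∀ c ∈ P, ∀ d ∈ P, c ≠ d → c.1 ≠ d.1 ∧ c.2 ≠ d.2 := by
  simp [placements, and_assoc]

lemma mem_uncancelled {B P : Finset (ℕ × ℕ)} {c : ℕ × ℕ} :
    c ∈ uncancelled B P ↔ c ∈ B ∧ c ∉ P ∧
      ∀ r ∈ P, ¬(r.2 = c.2 ∧ r.1 < c.1) ∧ ¬(r.1 = c.1 ∧ c.2 < r.2) := by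
  simp [uncancelled, and_assoc]

lemma fst_injOn {B : Finset (ℕ × ℕ)} {k : ℕ} {P : Finset (ℕ × ℕ)}
    (hP : P ∈ placements B k) : ∀ c ∈ P, ∀ d ∈ P, c.1 = d.1 → c = d := by
  intro c hc d hd h
  by_contra hne
  exact (mem_placements.1 hP).2.2 c hc d hd hne |>.1 h

lemma snd_injOn {B : Finset (ℕ × ℕ)} {k : ℕ} {P : Finset (ℕ × ℕ)}
    (hP : P ∈ placements B k) : ∀ c ∈ P, ∀ d ∈ P, c.2 = d.2 → c = d := by
  intro c hc d hd h
  by_contra hne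
  exact (mem_placements.1 hP).2.2 c hc d hd hne |>.2 h

-- ## rank counting lemmas

lemma rank_strictMono {F : Finset ℕ} {c d : ℕ} (hd : d ∈ F) (hcd : c < d) :
    (F.filter (· ≤ c)).card < (F.filter (· ≤ d)).card := by
  apply Finset.card_lt_card
  rw [Finset.ssubset_iff_of_subset (by intro a; simp only [Finset.mem_filter]; exact fun h => ⟨h.1, le_trans h.2 hcd.le⟩)]
  exact ⟨d, by simp [hd], by simp [hcd]⟩

lemma rank_injOn (F : Finset ℕ) : ∀ c ∈ F, ∀ d ∈ F,
    (F.filter (· ≤ c)).card = (F.filter (· ≤ d)).card → c = d := by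
  intro c hc d hd h
  rcases lt_trichotomy c d with h1 | h1 | h1
  · exact absurd h (rank_strictMono hd h1).ne
  · exact h1
  · exact absurd h.symm (rank_strictMono hc h1).ne

lemma rank_image (F : Finset ℕ) :
    F.image (fun c => (F.filter (· ≤ c)).card) = Finset.Icc 1 F.card := by
  apply Finset.eq_of_subset_of_card_le
  · intro u hu
    simp only [Finset.mem_image] at hu
    obtain ⟨c, hc, rfl⟩ := hu
    simp only [Finset.mem_Icc]
    constructor
    · exact Finset.card_pos.2 ⟨c, by simp [hc]⟩
    · exact Finset.card_le_card (Finset.filter_subset _ _)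
  · rw [Nat.card_Icc, Finset.card_image_of_injOn (fun c hc d hd => rank_injOn F c hc d hd)]
    omega

lemma rank_eq {mm : ℕ} {C : Finset ℕ} (hC : C ⊆ Finset.Icc 1 mm) {c : ℕ}
    (hc : c ∈ Finset.Icc 1 mm \ C) :
    ((Finset.Icc 1 mm \ C).filter (· ≤ c)).card + (C.filter (· < c)).card = c := by
  simp only [Finset.mem_sdiff, Finset.mem_Icc] at hc
  have key : Finset.Icc 1 c = ((Finset.Icc 1 mm \ C).filter (· ≤ c)) ∪ (C.filter (· < c)) := by
    ext d
    simp only [Finset.mem_Icc, Finset.mem_union, Finset.mem_filter, Finset.mem_sdiff]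
    constructor
    · intro ⟨h1, h2⟩
      by_cases hdC : d ∈ C
      · right
        refine ⟨hdC, lt_of_le_of_ne h2 ?_⟩
        rintro rfl; exact hc.2 hdC
      · left; exact ⟨⟨⟨h1, h2.trans hc.1.2⟩, hdC⟩, h2⟩
    · rintro (⟨⟨⟨h1, _⟩, _⟩, h2⟩ | ⟨h1, h2⟩)
      · exact ⟨h1, h2⟩
      · have := hC h1; rw [Finset.mem_Icc] at this; exact ⟨this.1, h2.le⟩
  have hdisj : Disjoint ((Finset.Icc 1 mm \ C).filter (· ≤ c)) (C.filter (· < c)) := by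
    rw [Finset.disjoint_left]
    intro a ha hb
    simp only [Finset.mem_filter, Finset.mem_sdiff] at ha hb
    exact ha.1.2 hb.1
  have := congrArg Finset.card key
  rw [Nat.card_Icc, Finset.card_union_of_disjoint hdisj] at this
  omega
-- ## board lemmas

lemma colHeights_length (α : List Bool) : ∀ t, (colHeights α t).length = α.count true := by
  induction α with
  | nil => simp [colHeights]
  | cons c r ih =>
    intro t
    cases c <;> simp [colHeights, ih, List.count_cons]

lemma colHeights_getD_le (α : List Bool) : ∀ t i, (colHeights α t).getD i 0 ≤ t + α.count false := by
  induction α with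
  | nil => intro t i; simp [colHeights]
  | cons c r ih =>
    intro t i
    cases c with
    | true =>
      cases i with
      | zero => simp [colHeights, List.count_cons]
      | succ i => simpa [colHeights, List.count_cons] using ih t i
    | false =>
      have h1 := ih (t + 1) i
      have h2 : (false :: r).count false = r.count false + 1 := by simp
      show (colHeights r (t + 1)).getD i 0 ≤ _
      omega

lemma colHeights_shift (α : List Bool) : ∀ t, colHeights α (t + 1) = (colHeights α t).map (· + 1) := by
  induction α with
  | nil => simp [colHeights]
  | cons c r ih =>
    intro t
    cases c <;> simp [colHeights, ih]

lemma mem_boardOf {α : List Bool} {c : ℕ × ℕ} :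
    c ∈ boardOf α ↔ ∃ i j, c = (i + 1, j + 1) ∧ j < (colHeights α 0).getD i 0 := by
  constructor
  · intro hc
    simp only [boardOf, Finset.mem_image, Finset.mem_filter, Finset.mem_product] at hc
    obtain ⟨⟨i, j⟩, ⟨_, hlt⟩, rfl⟩ := hc
    exact ⟨i, j, rfl, hlt⟩
  · rintro ⟨i, j, rfl, hlt⟩
    simp only [boardOf, Finset.mem_image, Finset.mem_filter, Finset.mem_product]
    refine ⟨(i, j), ⟨⟨?_, ?_⟩, hlt⟩, rfl⟩
    · simp only [Finset.mem_range]
      by_contra h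
      push_neg at h
      rw [List.getD_eq_default] at hlt
      · omega
      · rw [colHeights_length]
        calc α.count true ≤ α.length := List.count_le_length
        _ ≤ i := h
    · simp only [Finset.mem_range]
      have h1 := colHeights_getD_le α 0 i
      have h2 : α.count false ≤ α.length := List.count_le_length
      omega

lemma boardOf_bounds {α : List Bool} {c : ℕ × ℕ} (hc : c ∈ boardOf α) :
    1 ≤ c.1 ∧ c.1 ≤ α.count true ∧ 1 ≤ c.2 ∧ c.2 ≤ α.count false := by
  rw [mem_boardOf] at hc
  obtain ⟨i, j, rfl, hlt⟩ := hc
  refine ⟨by simp, ?_, by simp, ?_⟩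
  · simp only
    by_contra h
    push_neg at h
    rw [List.getD_eq_default] at hlt
    · omega
    · rw [colHeights_length]; omega
  · have := colHeights_getD_le α 0 i
    simp only
    omega

lemma boardOf_nil : boardOf [] = ∅ := by
  ext c
  simp [mem_boardOf, colHeights]

lemma boardOf_cons_true (α : List Bool) :
    boardOf (true :: α) = (boardOf α).image (fun c => (c.1 + 1, c.2)) := by
  ext c
  simp only [mem_boardOf, Finset.mem_image]
  constructor
  · rintro ⟨i, j, rfl, hlt⟩
    cases i with
    | zero => simp [colHeights] at hlt
    | succ i =>
      refine ⟨(i + 1, j + 1), ⟨i, j, rfl, ?_⟩, rfl⟩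
      simpa [colHeights] using hlt
  · rintro ⟨d, ⟨i, j, rfl, hlt⟩, rfl⟩
    exact ⟨i + 1, j, rfl, by simpa [colHeights] using hlt⟩

lemma getD_map_succ (l : List ℕ) (i : ℕ) :
    (l.map (· + 1)).getD i 0 = if i < l.length then l.getD i 0 + 1 else 0 := by
  by_cases h : i < l.length
  · rw [if_pos h]
    rw [List.getD_eq_getElem _ _ (by simpa using h), List.getD_eq_getElem _ _ h]
    simp
  · rw [if_neg h, List.getD_eq_default]
    simpa using not_lt.1 h

lemma boardOf_cons_false (α : List Bool) :
    boardOf (false :: α) = ((Finset.Icc 1 (α.count true)).image (fun i => (i, 1))) ∪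
      (boardOf α).image (fun c => (c.1, c.2 + 1)) := by
  ext c
  simp only [mem_boardOf, Finset.mem_union, Finset.mem_image]
  have hch : colHeights (false :: α) 0 = (colHeights α 0).map (· + 1) := by
    show colHeights α (0 + 1) = _
    exact colHeights_shift α 0
  constructor
  · rintro ⟨i, j, rfl, hlt⟩
    rw [hch, getD_map_succ] at hlt
    by_cases h : i < (colHeights α 0).length
    · rw [if_pos h] at hlt
      cases j with
      | zero =>
        left
        refine ⟨i + 1, ?_, rfl⟩
        rw [Finset.mem_Icc, ← colHeights_length α 0]
        omega
      | succ j =>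
        right
        exact ⟨(i + 1, j + 1), ⟨i, j, rfl, by omega⟩, rfl⟩
    · rw [if_neg h] at hlt; omega
  · rintro (⟨i, hi, rfl⟩ | ⟨d, hd, rfl⟩)

    · rw [Finset.mem_Icc] at hi
      refine ⟨i - 1, 0, by simp; omega, ?_⟩
      rw [hch, getD_map_succ, if_pos (by rw [colHeights_length]; omega)]
      omega
    · obtain ⟨i, j, rfl, hlt⟩ := hd
      refine ⟨i, j + 1, rfl, ?_⟩
      rw [hch, getD_map_succ, if_pos]
      · omega
      · by_contra h
        rw [List.getD_eq_default _ _ (by omega)] at hlt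
        omega

-- ## vanishing

lemma placements_le_fst {B : Finset (ℕ × ℕ)} {k : ℕ} {P : Finset (ℕ × ℕ)}
    (hP : P ∈ placements B k) : k ≤ (B.image Prod.fst).card := by
  obtain ⟨hPB, hcard, _⟩ := mem_placements.1 hP
  calc k = P.card := hcard.symm
  _ = (P.image Prod.fst).card := (Finset.card_image_of_injOn (fun c hc d hd => fst_injOn hP c hc d hd)).symm
  _ ≤ (B.image Prod.fst).card := Finset.card_le_card (Finset.image_subset_image hPB)

lemma placements_le_snd {B : Finset (ℕ × ℕ)} {k : ℕ} {P : Finset (ℕ × ℕ)}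
    (hP : P ∈ placements B k) : k ≤ (B.image Prod.snd).card := by
  obtain ⟨hPB, hcard, _⟩ := mem_placements.1 hP
  calc k = P.card := hcard.symm
  _ = (P.image Prod.snd).card := (Finset.card_image_of_injOn (fun c hc d hd => snd_injOn hP c hc d hd)).symm
  _ ≤ (B.image Prod.snd).card := Finset.card_le_card (Finset.image_subset_image hPB)

lemma rookPoly_boardOf_eq_zero {A : Type*} [CommRing A] (w : ℕ → ℕ → A) {α : List Bool} {k : ℕ}
    (h : min (α.count true) (α.count false) < k) : rookPoly w (boardOf α) k = 0 := by
  have hempty : placements (boardOf α) k = ∅ := by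
    rw [Finset.eq_empty_iff_forall_notMem]
    intro P hP
    rcases min_lt_iff.1 h with h' | h'
    · have h1 := placements_le_fst hP
      have h2 : (boardOf α).image Prod.fst ⊆ Finset.Icc 1 (α.count true) := by
        intro a ha
        simp only [Finset.mem_image] at ha
        obtain ⟨c, hc, rfl⟩ := ha
        have := boardOf_bounds hc
        rw [Finset.mem_Icc]; omega
      have := Finset.card_le_card h2
      rw [Nat.card_Icc] at this
      omega
    · have h1 := placements_le_snd hP
      have h2 : (boardOf α).image Prod.snd ⊆ Finset.Icc 1 (α.count false) := by
        intro a ha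
        simp only [Finset.mem_image] at ha
        obtain ⟨c, hc, rfl⟩ := ha
        have := boardOf_bounds hc
        rw [Finset.mem_Icc]; omega
      have := Finset.card_le_card h2
      rw [Nat.card_Icc] at this
      omega
  rw [rookPoly, hempty, Finset.sum_empty]
-- ## algebra lemmas

/-- weight of a full bottom row of length `p`. -/
def wcol {A : Type*} [CommRing A] (w : ℕ → ℕ → A) (p : ℕ) : A := ∏ u ∈ Finset.Icc 1 p, w u 1

section Algebra

variable {A R : Type*} [CommRing A] [Ring R] (w : ℕ → ℕ → A) (ι : A →+* R) (x y : R)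

lemma wcol_succ (r : ℕ) : wcol w (r + 1) = wcol w r * w (r + 1) 1 := by
  rw [wcol, wcol, Finset.prod_Icc_succ_top (by omega)]

lemma xpow_mul_iota (hx : ∀ s t : ℕ, x * ι (w s t) = ι (w (s + 1) t) * x) (p s t : ℕ) :
    x ^ p * ι (w s t) = ι (w (s + p) t) * x ^ p := by
  induction p generalizing s with
  | zero => simp
  | succ p ih =>
    have h1 : s + (p + 1) = (s + 1) + p := by omega
    rw [pow_succ, mul_assoc, hx, ← mul_assoc, ih (s + 1), h1, mul_assoc]

lemma mul_iota_prod {γ : Type*} (z : R) (u v : ℕ → ℕ → ℕ)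
    (hz : ∀ s t, z * ι (w s t) = ι (w (u s t) (v s t)) * z)
    (S : Finset γ) (f g : γ → ℕ) :
    z * ι (∏ c ∈ S, w (f c) (g c)) =
      ι (∏ c ∈ S, w (u (f c) (g c)) (v (f c) (g c))) * z := by
  classical
  induction S using Finset.induction_on with
  | empty => simp
  | insert _ _ ha ih =>
    rw [Finset.prod_insert ha, Finset.prod_insert ha, map_mul, map_mul, ← mul_assoc, hz,
      mul_assoc, ih, ← mul_assoc]

lemma mul_iota_sum_prod {γ δ : Type*} (z : R) (u v : ℕ → ℕ → ℕ)
    (hz : ∀ s t, z * ι (w s t) = ι (w (u s t) (v s t)) * z)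
    (T : Finset δ) (U : δ → Finset γ) (f g : δ → γ → ℕ) :
    z * ι (∑ P ∈ T, ∏ c ∈ U P, w (f P c) (g P c)) =
      ι (∑ P ∈ T, ∏ c ∈ U P, w (u (f P c) (g P c)) (v (f P c) (g P c))) * z := by
  rw [map_sum, map_sum, Finset.mul_sum, Finset.sum_mul]
  exact Finset.sum_congr rfl fun P _ => mul_iota_prod w ι z u v hz (U P) (f P) (g P)

lemma y_mul_xpow (hyx : y * x = ι (w 1 1) * (x * y) + 1)
    (hx : ∀ s t : ℕ, x * ι (w s t) = ι (w (s + 1) t) * x) (p : ℕ) :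
    y * x ^ p = ι (wcol w p) * x ^ p * y +
      ∑ q ∈ Finset.range p, ι (wcol w q) * x ^ (p - 1) := by
  induction p with
  | zero => simp [wcol]
  | succ r ih =>
    have key : (ι (wcol w r) * x ^ r * y) * x
        = ι (wcol w (r + 1)) * x ^ (r + 1) * y + ι (wcol w r) * x ^ r := by
      calc (ι (wcol w r) * x ^ r * y) * x
          = ι (wcol w r) * (x ^ r * (y * x)) := by rw [mul_assoc, mul_assoc]
        _ = ι (wcol w r) * (x ^ r * (ι (w 1 1) * (x * y)) + x ^ r) := by
            rw [hyx, mul_add, mul_one]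
        _ = ι (wcol w r) * ((x ^ r * ι (w 1 1)) * (x * y)) + ι (wcol w r) * x ^ r := by
            rw [mul_add, ← mul_assoc (x ^ r)]
        _ = ι (wcol w r) * (ι (w (1 + r) 1) * (x ^ (r + 1) * y)) + ι (wcol w r) * x ^ r := by
            rw [xpow_mul_iota w ι x hx, mul_assoc, ← mul_assoc (x ^ r) x y, ← pow_succ]
        _ = (ι (wcol w r) * ι (w (1 + r) 1)) * (x ^ (r + 1) * y) + ι (wcol w r) * x ^ r := by
            rw [mul_assoc]
        _ = ι (wcol w (r + 1)) * x ^ (r + 1) * y + ι (wcol w r) * x ^ r := by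
            rw [← map_mul, Nat.add_comm 1 r, ← wcol_succ, mul_assoc]
    calc y * x ^ (r + 1) = (y * x ^ r) * x := by rw [pow_succ, mul_assoc]
      _ = (ι (wcol w r) * x ^ r * y) * x
          + ∑ q ∈ Finset.range r, (ι (wcol w q) * x ^ (r - 1)) * x := by
          rw [ih, add_mul, Finset.sum_mul]
      _ = (ι (wcol w (r + 1)) * x ^ (r + 1) * y + ι (wcol w r) * x ^ r)
          + ∑ q ∈ Finset.range r, ι (wcol w q) * x ^ r := by
          rw [key]
          congr 1
          apply Finset.sum_congr rfl
          intro q hq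
          rw [Finset.mem_range] at hq
          rw [mul_assoc, ← pow_succ]
          congr 2
          omega
      _ = ι (wcol w (r + 1)) * x ^ (r + 1) * y
          + ∑ q ∈ Finset.range (r + 1), ι (wcol w q) * x ^ (r + 1 - 1) := by
          rw [Finset.sum_range_succ, Nat.add_sub_cancel, add_assoc]
          congr 1
          exact add_comm _ _

end Algebra
-- ## shift maps

def shH : ℕ × ℕ → ℕ × ℕ := fun c => (c.1 + 1, c.2)
def unH : ℕ × ℕ → ℕ × ℕ := fun c => (c.1 - 1, c.2)
def shV : ℕ × ℕ → ℕ × ℕ := fun c => (c.1, c.2 + 1)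
def unV : ℕ × ℕ → ℕ × ℕ := fun c => (c.1, c.2 - 1)

lemma shH_inj : Function.Injective shH := by
  intro a b h
  simp only [shH, Prod.mk.injEq] at h
  exact Prod.ext (by omega) h.2

lemma shV_inj : Function.Injective shV := by
  intro a b h
  simp only [shV, Prod.mk.injEq] at h
  exact Prod.ext h.1 (by omega)

lemma image_image_id {γ : Type*} [DecidableEq γ] {s : Finset γ} {f g : γ → γ}
    (h : ∀ a ∈ s, g (f a) = a) : (s.image f).image g = s := by
  rw [Finset.image_image]
  exact (Finset.image_congr (fun a ha => h a ha)).trans Finset.image_id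

lemma nwCount_image_shH (P : Finset (ℕ × ℕ)) (c : ℕ × ℕ) :
    nwCount (P.image shH) (shH c) = nwCount P c := by
  unfold nwCount
  have : (P.image shH).filter (fun r => r.1 < (shH c).1 ∧ (shH c).2 < r.2)
      = (P.filter (fun r => r.1 < c.1 ∧ c.2 < r.2)).image shH := by
    ext r
    simp only [Finset.mem_filter, Finset.mem_image]
    simp only [shH]
    constructor
    · rintro ⟨⟨a, ha, rfl⟩, h2⟩
      exact ⟨a, ⟨ha, by simp at h2 ⊢; omega⟩, rfl⟩
    · rintro ⟨a, ⟨ha, h2⟩, rfl⟩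
      exact ⟨⟨a, ha, rfl⟩, by simp; omega⟩
  rw [this, Finset.card_image_of_injective _ shH_inj]

lemma nwCount_image_shV (P : Finset (ℕ × ℕ)) (c : ℕ × ℕ) :
    nwCount (P.image shV) (shV c) = nwCount P c := by
  unfold nwCount
  have : (P.image shV).filter (fun r => r.1 < (shV c).1 ∧ (shV c).2 < r.2)
      = (P.filter (fun r => r.1 < c.1 ∧ c.2 < r.2)).image shV := by
    ext r
    simp only [Finset.mem_filter, Finset.mem_image]
    simp only [shV]
    constructor
    · rintro ⟨⟨a, ha, rfl⟩, h2⟩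
      exact ⟨a, ⟨ha, by simp at h2 ⊢; omega⟩, rfl⟩
    · rintro ⟨a, ⟨ha, h2⟩, rfl⟩
      exact ⟨⟨a, ha, rfl⟩, by simp; omega⟩
  rw [this, Finset.card_image_of_injective _ shV_inj]

lemma nwCount_le_fst {S P : Finset (ℕ × ℕ)} {k : ℕ} (hP : P ∈ placements S k)
    (hS : ∀ c ∈ S, 1 ≤ c.1) (c : ℕ × ℕ) : nwCount P c ≤ c.1 := by
  obtain ⟨hPB, _, _⟩ := mem_placements.1 hP
  unfold nwCount
  calc (P.filter (fun r => r.1 < c.1 ∧ c.2 < r.2)).card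
      = ((P.filter (fun r => r.1 < c.1 ∧ c.2 < r.2)).image Prod.fst).card := by
        rw [Finset.card_image_of_injOn]
        intro a ha b hb hab
        exact fst_injOn hP a (Finset.filter_subset _ _ ha) b (Finset.filter_subset _ _ hb) hab
    _ ≤ (Finset.Ico 1 c.1).card := by
        apply Finset.card_le_card
        intro a ha
        simp only [Finset.mem_image, Finset.mem_filter] at ha
        obtain ⟨r, ⟨hr, h1, _⟩, rfl⟩ := ha
        rw [Finset.mem_Ico]
        exact ⟨hS r (hPB hr), h1⟩
    _ ≤ c.1 := by rw [Nat.card_Ico]; omega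

lemma uncancelled_image_shH (S P : Finset (ℕ × ℕ)) :
    uncancelled (S.image shH) (P.image shH) = (uncancelled S P).image shH := by
  ext c
  simp only [mem_uncancelled, Finset.mem_image]
  constructor
  · rintro ⟨⟨d, hd, rfl⟩, hnp, hcond⟩
    refine ⟨d, ⟨hd, ?_, ?_⟩, rfl⟩
    · intro hdP; exact hnp ⟨d, hdP, rfl⟩
    · intro r hr
      have := hcond (shH r) ⟨r, hr, rfl⟩
      simp only [shH] at this ⊢
      constructor
      · intro ⟨h1, h2⟩; exact this.1 ⟨h1, by omega⟩
      · intro ⟨h1, h2⟩; exact this.2 ⟨by omega, h2⟩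
  · rintro ⟨d, ⟨hd, hnp, hcond⟩, rfl⟩
    refine ⟨⟨d, hd, rfl⟩, ?_, ?_⟩
    · rintro ⟨a, haP, ha⟩
      exact hnp (shH_inj ha ▸ haP)
    · rintro r ⟨a, haP, rfl⟩
      have := hcond a haP
      simp only [shH] at this ⊢
      constructor
      · intro ⟨h1, h2⟩; exact this.1 ⟨h1, by omega⟩
      · intro ⟨h1, h2⟩; exact this.2 ⟨by omega, h2⟩

lemma placements_image_shH {S : Finset (ℕ × ℕ)} {k : ℕ} {P : Finset (ℕ × ℕ)}
    (hP : P ∈ placements S k) : P.image shH ∈ placements (S.image shH) k := by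
  obtain ⟨hPB, hcard, hna⟩ := mem_placements.1 hP
  refine mem_placements.2 ⟨Finset.image_subset_image hPB,
    by rw [Finset.card_image_of_injective _ shH_inj, hcard], ?_⟩
  intro c hc d hd hne
  obtain ⟨a, ha, rfl⟩ := Finset.mem_image.1 hc
  obtain ⟨b, hb, rfl⟩ := Finset.mem_image.1 hd
  have hab : a ≠ b := fun h => hne (by rw [h])
  have := hna a ha b hb hab
  simp only [shH]
  constructor <;> simp <;> omega

lemma partX {A : Type*} [CommRing A] (w : ℕ → ℕ → A) {S : Finset (ℕ × ℕ)}
    (hS : ∀ c ∈ S, 1 ≤ c.1) (k : ℕ) :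
    rookPoly w (S.image shH) k =
      ∑ P ∈ placements S k, ∏ c ∈ uncancelled S P, w (c.1 - nwCount P c + 1) c.2 := by
  rw [rookPoly]
  refine (Finset.sum_nbij' (i := fun P => Finset.image shH P) (j := fun Q => Finset.image unH Q)
    ?_ ?_ ?_ ?_ ?_).symm
  · intro P hP; exact placements_image_shH hP
  · intro Q hQ
    obtain ⟨hQB, hcard, hna⟩ := mem_placements.1 hQ
    have hQ1 : ∀ q ∈ Q, 1 ≤ q.1 ∧ shH (unH q) = q := by
      intro q hq
      obtain ⟨s0, _, rfl⟩ := Finset.mem_image.1 (hQB hq)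
      simp [shH, unH]
    refine mem_placements.2 ⟨?_, ?_, ?_⟩
    · intro c hc
      obtain ⟨q, hq, rfl⟩ := Finset.mem_image.1 hc
      obtain ⟨s0, hs0, rfl⟩ := Finset.mem_image.1 (hQB hq)
      simpa [unH, shH] using hs0
    · rw [Finset.card_image_of_injOn, hcard]
      intro a ha b hb hab
      have h1 := (hQ1 a ha).2
      have h2 := (hQ1 b hb).2
      rw [← h1, ← h2, hab]
    · intro c hc d hd hne
      obtain ⟨q, hq, rfl⟩ := Finset.mem_image.1 hc
      obtain ⟨q', hq', rfl⟩ := Finset.mem_image.1 hd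
      have hqq : q ≠ q' := fun h => hne (by rw [h])
      have := hna q hq q' hq' hqq
      have h1 := (hQ1 q hq).1
      have h2 := (hQ1 q' hq').1
      have e1 : q = shH (unH q) := ((hQ1 q hq).2).symm
      have e2 : q' = shH (unH q') := ((hQ1 q' hq').2).symm
      rw [e1, e2] at this
      simp only [shH, unH] at this ⊢
      constructor <;> omega
  · intro P _
    exact image_image_id (fun a _ => by simp [shH, unH])
  · intro Q hQ
    obtain ⟨hQB, _, _⟩ := mem_placements.1 hQ
    apply image_image_id
    intro q hq
    obtain ⟨s0, _, rfl⟩ := Finset.mem_image.1 (hQB hq)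
    simp [shH, unH]
  · intro P hP
    rw [uncancelled_image_shH, Finset.prod_image
      (fun a _ b _ h => shH_inj h)]
    apply Finset.prod_congr rfl
    intro c hc
    have hle := nwCount_le_fst hP hS c
    rw [nwCount_image_shH]
    have : (shH c).1 - nwCount P c = c.1 - nwCount P c + 1 := by simp [shH]; omega
    rw [this]
    rfl
-- ## bottom row infrastructure

def botRow (mm : ℕ) : Finset (ℕ × ℕ) := (Finset.Icc 1 mm).image (fun i => (i, 1))

def freeCols (mm : ℕ) (P0 : Finset (ℕ × ℕ)) : Finset ℕ :=
  Finset.Icc 1 mm \ P0.image Prod.fst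

lemma mem_botRow {mm : ℕ} {c : ℕ × ℕ} :
    c ∈ botRow mm ↔ 1 ≤ c.1 ∧ c.1 ≤ mm ∧ c.2 = 1 := by
  simp only [botRow, Finset.mem_image, Finset.mem_Icc]
  constructor
  · rintro ⟨i, hi, rfl⟩; exact ⟨hi.1, hi.2, rfl⟩
  · rintro ⟨h1, h2, h3⟩
    exact ⟨c.1, ⟨h1, h2⟩, by rw [← h3]⟩

lemma placements_mono {B B' : Finset (ℕ × ℕ)} (h : B ⊆ B') (k : ℕ) :
    placements B k ⊆ placements B' k := by
  intro P hP
  obtain ⟨h1, h2, h3⟩ := mem_placements.1 hP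
  exact mem_placements.2 ⟨h1.trans h, h2, h3⟩

lemma placements_image_shV {S : Finset (ℕ × ℕ)} {k : ℕ} {P : Finset (ℕ × ℕ)}
    (hP : P ∈ placements S k) : P.image shV ∈ placements (S.image shV) k := by
  obtain ⟨hPB, hcard, hna⟩ := mem_placements.1 hP
  refine mem_placements.2 ⟨Finset.image_subset_image hPB,
    by rw [Finset.card_image_of_injective _ shV_inj, hcard], ?_⟩
  intro c hc d hd hne
  obtain ⟨a, ha, rfl⟩ := Finset.mem_image.1 hc
  obtain ⟨b, hb, rfl⟩ := Finset.mem_image.1 hd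
  have hab : a ≠ b := fun h => hne (by rw [h])
  have := hna a ha b hb hab
  simp only [shV]
  constructor <;> simp <;> omega

lemma freeCols_card {mm k : ℕ} {S P0 : Finset (ℕ × ℕ)} (hP0 : P0 ∈ placements S k)
    (hS : ∀ c ∈ S, 1 ≤ c.1 ∧ c.1 ≤ mm ∧ 1 ≤ c.2) :
    (freeCols mm P0).card = mm - k := by
  obtain ⟨hPB, hcard, _⟩ := mem_placements.1 hP0
  have hsub : P0.image Prod.fst ⊆ Finset.Icc 1 mm := by
    intro a ha
    obtain ⟨c, hc, rfl⟩ := Finset.mem_image.1 ha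
    have := hS c (hPB hc)
    rw [Finset.mem_Icc]; omega
  rw [freeCols, Finset.card_sdiff_of_subset hsub, Nat.card_Icc,
    Finset.card_image_of_injOn (fun a ha b hb => fst_injOn hP0 a ha b hb), hcard]
  omega

lemma cols_filter_card {S P0 : Finset (ℕ × ℕ)} {k : ℕ} (hP0 : P0 ∈ placements S k) (c : ℕ) :
    (P0.filter (fun d => d.1 < c)).card = ((P0.image Prod.fst).filter (· < c)).card := by
  have himg : (P0.filter (fun d => d.1 < c)).image Prod.fst
      = (P0.image Prod.fst).filter (· < c) := by
    ext a
    simp only [Finset.mem_image, Finset.mem_filter]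
    constructor
    · rintro ⟨d, ⟨hd, hlt⟩, rfl⟩
      exact ⟨⟨d, hd, rfl⟩, hlt⟩
    · rintro ⟨⟨d, hd, rfl⟩, hlt⟩
      exact ⟨d, ⟨hd, hlt⟩, rfl⟩
  rw [← himg, Finset.card_image_of_injOn]
  intro a ha b hb
  exact fst_injOn hP0 a (Finset.filter_subset _ _ ha) b (Finset.filter_subset _ _ hb)

/-- number of rooks NW of a bottom cell, where `Q`'s non-bottom rooks are `shV P0`. -/
lemma nwCount_bottom {P0 Q : Finset (ℕ × ℕ)} (c : ℕ)
    (hQ : ∀ r, (r ∈ Q ∧ 1 < r.2) ↔ ∃ d ∈ P0, r = shV d) :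
    nwCount Q (c, 1) = (P0.filter (fun d => d.1 < c)).card := by
  unfold nwCount
  have : Q.filter (fun r => r.1 < (c, 1).1 ∧ (c, 1).2 < r.2)
      = (P0.filter (fun d => d.1 < c)).image shV := by
    ext r
    simp only [Finset.mem_filter, Finset.mem_image]
    constructor
    · rintro ⟨hr, h1, h2⟩
      obtain ⟨d, hd, rfl⟩ := (hQ r).1 ⟨hr, h2⟩
      exact ⟨d, ⟨hd, h1⟩, rfl⟩
    · rintro ⟨d, ⟨hd, hlt⟩, rfl⟩
      have := (hQ (shV d)).2 ⟨d, hd, rfl⟩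
      exact ⟨((hQ (shV d)).2 ⟨d, hd, rfl⟩).1, hlt, ((hQ (shV d)).2 ⟨d, hd, rfl⟩).2⟩
  rw [this, Finset.card_image_of_injective _ shV_inj]

lemma sum_Icc_pred {A : Type*} [AddCommMonoid A] (f : ℕ → A) (p : ℕ) :
    ∑ u ∈ Finset.Icc 1 p, f (u - 1) = ∑ q ∈ Finset.range p, f q := by
  refine Finset.sum_nbij' (i := fun u => u - 1) (j := fun q => q + 1) ?_ ?_ ?_ ?_ ?_
  · intro a ha; rw [Finset.mem_Icc] at ha; rw [Finset.mem_range]; omega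
  · intro a ha; rw [Finset.mem_range] at ha; rw [Finset.mem_Icc]; omega
  · intro a ha; rw [Finset.mem_Icc] at ha; omega
  · intro a _; omega
  · intro a _; rfl
-- ## part A : placements avoiding the bottom row

section PartA

variable {mm k : ℕ} {S P0 : Finset (ℕ × ℕ)}

lemma uncA (hS : ∀ c ∈ S, 1 ≤ c.1 ∧ c.1 ≤ mm ∧ 1 ≤ c.2) (hP0 : P0 ∈ placements S k) :
    uncancelled (botRow mm ∪ S.image shV) (P0.image shV) =
      (uncancelled S P0).image shV ∪ (freeCols mm P0).image (fun i => (i, 1)) := by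
  obtain ⟨hPB, hcard, hna⟩ := mem_placements.1 hP0
  ext c
  simp only [mem_uncancelled, Finset.mem_union, Finset.mem_image, mem_botRow, freeCols,
    Finset.mem_sdiff, Finset.mem_Icc]
  constructor
  · rintro ⟨hcB, hcP, hcond⟩
    rcases hcB with ⟨h1, h2, h3⟩ | ⟨d, hd, rfl⟩
    · right
      refine ⟨c.1, ⟨⟨h1, h2⟩, ?_⟩, ?_⟩
      · rintro ⟨d, hdP, hd1⟩
        have := (hcond (shV d) ⟨d, hdP, rfl⟩).2
        apply this
        have hSd := hS d (hPB hdP)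
        simp only [shV]
        constructor
        · exact hd1
        · omega
      · exact Prod.ext rfl h3.symm
    · left
      refine ⟨d, ⟨hd, ?_, ?_⟩, rfl⟩
      · intro hdP0; exact hcP ⟨d, hdP0, rfl⟩
      · intro r hr
        have := hcond (shV r) ⟨r, hr, rfl⟩
        simp only [shV] at this ⊢
        constructor
        · intro ⟨e1, e2⟩; exact this.1 ⟨by omega, by omega⟩
        · intro ⟨e1, e2⟩; exact this.2 ⟨by omega, by omega⟩
  · rintro (⟨d, ⟨hd, hdP, hcond⟩, rfl⟩ | ⟨i, ⟨⟨h1, h2⟩, hfree⟩, rfl⟩)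
    · refine ⟨Or.inr ⟨d, hd, rfl⟩, ?_, ?_⟩
      · rintro ⟨a, haP, ha⟩; exact hdP (shV_inj ha ▸ haP)
      · rintro r ⟨a, haP, rfl⟩
        have := hcond a haP
        simp only [shV]
        constructor
        · intro ⟨e1, e2⟩; exact this.1 ⟨by omega, by omega⟩
        · intro ⟨e1, e2⟩; exact this.2 ⟨by omega, by omega⟩
    · refine ⟨Or.inl ⟨h1, h2, rfl⟩, ?_, ?_⟩
      · rintro ⟨a, haP, ha⟩
        have := hS a (hPB haP)
        simp only [shV, Prod.ext_iff] at ha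
        omega
      · rintro r ⟨a, haP, rfl⟩
        have hSa := hS a (hPB haP)
        simp only [shV]
        constructor
        · intro ⟨e1, e2⟩
          omega
        · intro ⟨e1, e2⟩
          exact hfree ⟨a, haP, e1⟩

lemma disjA (hS : ∀ c ∈ S, 1 ≤ c.1 ∧ c.1 ≤ mm ∧ 1 ≤ c.2) (_hsub : P0 ⊆ S) :
    Disjoint ((uncancelled S P0).image shV) ((freeCols mm P0).image (fun i => (i, 1))) := by
  rw [Finset.disjoint_left]
  rintro a ha hb
  obtain ⟨d, hd, rfl⟩ := Finset.mem_image.1 ha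
  obtain ⟨i, _, hi⟩ := Finset.mem_image.1 hb
  have := (hS d (mem_uncancelled.1 hd).1).2.2
  have : (shV d).2 = 1 := by rw [← hi]
  simp only [shV] at this
  omega

lemma rank_prod_eq {A : Type*} [CommRing A] (w : ℕ → ℕ → A)
    (hS : ∀ c ∈ S, 1 ≤ c.1 ∧ c.1 ≤ mm ∧ 1 ≤ c.2) (hP0 : P0 ∈ placements S k) :
    ∏ i ∈ freeCols mm P0, w (((freeCols mm P0).filter (· ≤ i)).card) 1 = wcol w (mm - k) := by
  rw [← Finset.prod_image (f := fun u => w u 1)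
    (fun a ha b hb h => rank_injOn (freeCols mm P0) a ha b hb h), rank_image,
    freeCols_card hP0 hS, wcol]

lemma prodA {A : Type*} [CommRing A] (w : ℕ → ℕ → A)
    (hS : ∀ c ∈ S, 1 ≤ c.1 ∧ c.1 ≤ mm ∧ 1 ≤ c.2) (hP0 : P0 ∈ placements S k) :
    ∏ c ∈ uncancelled (botRow mm ∪ S.image shV) (P0.image shV),
        w (c.1 - nwCount (P0.image shV) c) c.2
      = (∏ c ∈ uncancelled S P0, w (c.1 - nwCount P0 c) (c.2 + 1)) * wcol w (mm - k) := by
  obtain ⟨hPB, hcard, hna⟩ := mem_placements.1 hP0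
  rw [uncA hS hP0, Finset.prod_union (disjA hS hPB)]
  congr 1
  · rw [Finset.prod_image (fun a _ b _ h => shV_inj h)]
    apply Finset.prod_congr rfl
    intro d _
    rw [nwCount_image_shV]
    rfl
  · rw [Finset.prod_image (f := fun c => w (c.1 - nwCount (P0.image shV) c) c.2)
      (g := fun i => (i, 1)) (fun a _ b _ h => by simpa [Prod.ext_iff] using h)]
    rw [← rank_prod_eq w hS hP0]
    apply Finset.prod_congr rfl
    intro i hi
    have hQ : ∀ r, (r ∈ P0.image shV ∧ 1 < r.2) ↔ ∃ d ∈ P0, r = shV d := by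
      intro r
      constructor
      · rintro ⟨hr, _⟩
        obtain ⟨d, hd, rfl⟩ := Finset.mem_image.1 hr
        exact ⟨d, hd, rfl⟩
      · rintro ⟨d, hd, rfl⟩
        refine ⟨Finset.mem_image_of_mem _ hd, ?_⟩
        have := hS d (hPB hd)
        simp only [shV]
        omega
    have hnw := nwCount_bottom (P0 := P0) i hQ
    have hrank : ((freeCols mm P0).filter (· ≤ i)).card
        + ((P0.image Prod.fst).filter (· < i)).card = i := by
      apply rank_eq
      · intro a ha
        obtain ⟨d, hd, rfl⟩ := Finset.mem_image.1 ha
        have := hS d (hPB hd)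
        rw [Finset.mem_Icc]
        omega
      · exact hi
    show w ((i, 1).1 - nwCount (P0.image shV) (i, 1)) (i, 1).2 = _
    rw [hnw, cols_filter_card hP0]
    congr 1
    omega

lemma partA {A : Type*} [CommRing A] (w : ℕ → ℕ → A)
    (hS : ∀ c ∈ S, 1 ≤ c.1 ∧ c.1 ≤ mm ∧ 1 ≤ c.2) (k : ℕ) :
    ∑ P ∈ (placements (botRow mm ∪ S.image shV) k).filter (fun P => ∀ r ∈ P, r.2 ≠ 1),
        ∏ c ∈ uncancelled (botRow mm ∪ S.image shV) P, w (c.1 - nwCount P c) c.2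
      = (∑ P ∈ placements S k, ∏ c ∈ uncancelled S P, w (c.1 - nwCount P c) (c.2 + 1))
          * wcol w (mm - k) := by
  rw [Finset.sum_mul]
  refine (Finset.sum_nbij' (i := fun P => Finset.image shV P) (j := fun Q => Finset.image unV Q)
    ?_ ?_ ?_ ?_ ?_).symm
  · intro P hP
    rw [Finset.mem_filter]
    constructor
    · exact placements_mono Finset.subset_union_right k (placements_image_shV hP)
    · intro r hr
      obtain ⟨d, hd, rfl⟩ := Finset.mem_image.1 hr
      have := hS d ((mem_placements.1 hP).1 hd)
      simp only [shV]
      omega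
  · intro Q hQ
    rw [Finset.mem_filter] at hQ
    obtain ⟨hQpl, hQnb⟩ := hQ
    obtain ⟨hQB, hcard, hna⟩ := mem_placements.1 hQpl
    have hQ1 : ∀ q ∈ Q, ∃ d ∈ S, q = shV d := by
      intro q hq
      rcases Finset.mem_union.1 (hQB hq) with h | h
      · exact absurd (mem_botRow.1 h).2.2 (hQnb q hq)
      · obtain ⟨d, hd, rfl⟩ := Finset.mem_image.1 h
        exact ⟨d, hd, rfl⟩
    have hQ2 : ∀ q ∈ Q, 2 ≤ q.2 ∧ shV (unV q) = q := by
      intro q hq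
      obtain ⟨d, hd, rfl⟩ := hQ1 q hq
      have := hS d hd
      constructor
      · simp only [shV]; omega
      · simp [shV, unV]
    refine mem_placements.2 ⟨?_, ?_, ?_⟩
    · intro c hc
      obtain ⟨q, hq, rfl⟩ := Finset.mem_image.1 hc
      obtain ⟨d, hd, rfl⟩ := hQ1 q hq
      simpa [unV, shV] using hd
    · rw [Finset.card_image_of_injOn, hcard]
      intro a ha b hb hab
      rw [← (hQ2 a ha).2, ← (hQ2 b hb).2, hab]
    · intro c hc d hd hne
      obtain ⟨q, hq, rfl⟩ := Finset.mem_image.1 hc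
      obtain ⟨q', hq', rfl⟩ := Finset.mem_image.1 hd
      have hqq : q ≠ q' := fun h => hne (by rw [h])
      have := hna q hq q' hq' hqq
      have h1 := (hQ2 q hq).1
      have h2 := (hQ2 q' hq').1
      simp only [unV] at *
      constructor <;> omega
  · intro P _
    exact image_image_id (fun a _ => by simp [shV, unV])
  · intro Q hQ
    rw [Finset.mem_filter] at hQ
    apply image_image_id
    intro q hq
    rcases Finset.mem_union.1 ((mem_placements.1 hQ.1).1 hq) with h | h
    · exact absurd (mem_botRow.1 h).2.2 (hQ.2 q hq)
    · obtain ⟨d, hd, rfl⟩ := Finset.mem_image.1 h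
      have := hS d hd
      simp [shV, unV]
  · intro P hP
    exact (prodA w hS hP).symm

end PartA
-- ## part B : placements using the bottom row

section PartB

variable {mm k : ℕ} {S P0 : Finset (ℕ × ℕ)}

lemma nwCount_insert_bottom (P0 : Finset (ℕ × ℕ)) (b : ℕ) (d : ℕ × ℕ) :
    nwCount (insert (b, 1) (P0.image shV)) (shV d) = nwCount P0 d := by
  unfold nwCount
  rw [Finset.filter_insert, if_neg (by simp [shV])]
  exact nwCount_image_shV P0 d

lemma uncB (hS : ∀ c ∈ S, 1 ≤ c.1 ∧ c.1 ≤ mm ∧ 1 ≤ c.2) (hP0 : P0 ∈ placements S k)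
    {b : ℕ} (hb : b ∈ freeCols mm P0) :
    uncancelled (botRow mm ∪ S.image shV) (insert (b, 1) (P0.image shV)) =
      (uncancelled S P0).image shV ∪
        ((freeCols mm P0).filter (· < b)).image (fun i => (i, 1)) := by
  obtain ⟨hPB, hcard, hna⟩ := mem_placements.1 hP0
  simp only [freeCols, Finset.mem_sdiff, Finset.mem_Icc] at hb
  ext c
  simp only [mem_uncancelled, Finset.mem_union, Finset.mem_image, mem_botRow, freeCols,
    Finset.mem_sdiff, Finset.mem_Icc, Finset.mem_insert, Finset.mem_filter]
  constructor
  · rintro ⟨hcB, hcP, hcond⟩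
    rcases hcB with ⟨h1, h2, h3⟩ | ⟨d, hd, rfl⟩
    · right
      refine ⟨c.1, ⟨⟨⟨h1, h2⟩, ?_⟩, ?_⟩, ?_⟩
      · rintro ⟨d, hdP, hd1⟩
        have := (hcond (shV d) (Or.inr ⟨d, hdP, rfl⟩)).2
        apply this
        have hSd := hS d (hPB hdP)
        simp only [shV]
        constructor
        · exact hd1
        · omega
      · -- c.1 < b
        have hc1 := (hcond (b, 1) (Or.inl rfl)).1
        simp only at hc1
        have hcb : c ≠ (b, 1) := fun h => hcP (Or.inl h)
        have : c.1 ≠ b := by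
          intro h
          exact hcb (Prod.ext h h3)
        omega
      · exact Prod.ext rfl h3.symm
    · left
      refine ⟨d, ⟨hd, ?_, ?_⟩, rfl⟩
      · intro hdP0; exact hcP (Or.inr ⟨d, hdP0, rfl⟩)
      · intro r hr
        have := hcond (shV r) (Or.inr ⟨r, hr, rfl⟩)
        simp only [shV] at this ⊢
        constructor
        · intro ⟨e1, e2⟩; exact this.1 ⟨by omega, by omega⟩
        · intro ⟨e1, e2⟩; exact this.2 ⟨by omega, by omega⟩
  · rintro (⟨d, ⟨hd, hdP, hcond⟩, rfl⟩ | ⟨i, ⟨⟨⟨h1, h2⟩, hfree⟩, hib⟩, rfl⟩)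
    · have hSd := hS d (mem_uncancelled.1 (mem_uncancelled.2 ⟨hd, hdP, hcond⟩ : d ∈ uncancelled S P0)).1
      refine ⟨Or.inr ⟨d, hd, rfl⟩, ?_, ?_⟩
      · rintro (h | ⟨a, haP, ha⟩)
        · have : (shV d).2 = 1 := by rw [h]
          simp only [shV] at this
          omega
        · exact hdP (shV_inj ha ▸ haP)
      · rintro r (rfl | ⟨a, haP, rfl⟩)
        · simp only [shV]
          constructor
          · intro ⟨e1, e2⟩; omega
          · intro ⟨e1, e2⟩; omega
        · have := hcond a haP
          simp only [shV]
          constructor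
          · intro ⟨e1, e2⟩; exact this.1 ⟨by omega, by omega⟩
          · intro ⟨e1, e2⟩; exact this.2 ⟨by omega, by omega⟩
    · refine ⟨Or.inl ⟨h1, h2, rfl⟩, ?_, ?_⟩
      · rintro (h | ⟨a, haP, ha⟩)
        · have : i = b := by
            have := congrArg Prod.fst h
            simpa using this
          omega
        · have := hS a (hPB haP)
          simp only [shV, Prod.ext_iff] at ha
          omega
      · rintro r (rfl | ⟨a, haP, rfl⟩)
        · simp only
          constructor
          · intro ⟨e1, e2⟩; omega
          · intro ⟨e1, e2⟩; omega
        · have hSa := hS a (hPB haP)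
          simp only [shV]
          constructor
          · intro ⟨e1, e2⟩; omega
          · intro ⟨e1, e2⟩; exact hfree ⟨a, haP, e1⟩

lemma filter_le_card {F : Finset ℕ} {b : ℕ} (hb : b ∈ F) :
    (F.filter (· ≤ b)).card = (F.filter (· < b)).card + 1 := by
  have : F.filter (· ≤ b) = insert b (F.filter (· < b)) := by
    ext d
    simp only [Finset.mem_filter, Finset.mem_insert]
    constructor
    · rintro ⟨hd, hle⟩
      rcases eq_or_lt_of_le hle with h | h
      · exact Or.inl h
      · exact Or.inr ⟨hd, h⟩
    · rintro (rfl | ⟨hd, hlt⟩)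
      · exact ⟨hb, le_refl _⟩
      · exact ⟨hd, hlt.le⟩
  rw [this, Finset.card_insert_of_notMem (by simp)]

lemma prodB {A : Type*} [CommRing A] (w : ℕ → ℕ → A)
    (hS : ∀ c ∈ S, 1 ≤ c.1 ∧ c.1 ≤ mm ∧ 1 ≤ c.2) (hP0 : P0 ∈ placements S k)
    {b : ℕ} (hb : b ∈ freeCols mm P0) :
    ∏ c ∈ uncancelled (botRow mm ∪ S.image shV) (insert (b, 1) (P0.image shV)),
        w (c.1 - nwCount (insert (b, 1) (P0.image shV)) c) c.2
      = (∏ c ∈ uncancelled S P0, w (c.1 - nwCount P0 c) (c.2 + 1))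
          * wcol w (((freeCols mm P0).filter (· < b)).card) := by
  obtain ⟨hPB, hcard, hna⟩ := mem_placements.1 hP0
  rw [uncB hS hP0 hb, Finset.prod_union (Finset.disjoint_of_subset_right
    (Finset.image_subset_image (Finset.filter_subset _ _)) (disjA hS hPB))]
  congr 1
  · rw [Finset.prod_image (fun a _ b _ h => shV_inj h)]
    apply Finset.prod_congr rfl
    intro d _
    rw [nwCount_insert_bottom]
    rfl
  · rw [Finset.prod_image (f := fun c => w (c.1 - nwCount (insert (b, 1) (P0.image shV)) c) c.2)
      (g := fun i => (i, 1)) (fun a _ b _ h => by simpa [Prod.ext_iff] using h)]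
    have hF' : ∀ i ∈ (freeCols mm P0).filter (· < b),
        ((freeCols mm P0).filter (· < b)).filter (· ≤ i) = (freeCols mm P0).filter (· ≤ i) := by
      intro i hi
      rw [Finset.mem_filter] at hi
      rw [Finset.filter_filter]
      apply Finset.filter_congr
      intro d _
      constructor
      · intro h; exact h.2
      · intro h; exact ⟨by omega, h⟩
    simp only [wcol]
    rw [← rank_image ((freeCols mm P0).filter (· < b)),
      Finset.prod_image (fun a ha b hb h => rank_injOn _ a ha b hb h)]
    apply Finset.prod_congr rfl
    intro i hi
    have hiF : i ∈ freeCols mm P0 := (Finset.mem_filter.1 hi).1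
    have hQ : ∀ r, (r ∈ insert (b, 1) (P0.image shV) ∧ 1 < r.2) ↔ ∃ d ∈ P0, r = shV d := by
      intro r
      constructor
      · rintro ⟨hr, h2⟩
        rcases Finset.mem_insert.1 hr with rfl | hr'
        · simp at h2
        · obtain ⟨d, hd, rfl⟩ := Finset.mem_image.1 hr'
          exact ⟨d, hd, rfl⟩
      · rintro ⟨d, hd, rfl⟩
        refine ⟨Finset.mem_insert_of_mem (Finset.mem_image_of_mem _ hd), ?_⟩
        have := hS d (hPB hd)
        simp only [shV]
        omega
    have hnw := nwCount_bottom (P0 := P0) i hQ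
    have hrank : ((freeCols mm P0).filter (· ≤ i)).card
        + ((P0.image Prod.fst).filter (· < i)).card = i := by
      apply rank_eq
      · intro a ha
        obtain ⟨d, hd, rfl⟩ := Finset.mem_image.1 ha
        have := hS d (hPB hd)
        rw [Finset.mem_Icc]
        omega
      · exact hiF
    show w ((i, 1).1 - nwCount _ (i, 1)) (i, 1).2 = _
    rw [hnw, cols_filter_card hP0, hF' i hi]
    congr 1
    omega

end PartB
section PartB2

variable {mm k : ℕ} {S : Finset (ℕ × ℕ)}

lemma bottom_unique {B : Finset (ℕ × ℕ)} {k : ℕ} {P : Finset (ℕ × ℕ)}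
    (hP : P ∈ placements B k) {b : ℕ × ℕ} (hbP : b ∈ P) (hb2 : b.2 = 1) :
    P.filter (fun r => r.2 = 1) = {b} := by
  ext r
  simp only [Finset.mem_filter, Finset.mem_singleton]
  constructor
  · rintro ⟨hr, hr2⟩
    exact snd_injOn hP r hr b hbP (hr2.trans hb2.symm)
  · rintro rfl
    exact ⟨hbP, hb2⟩

lemma placementsB (hS : ∀ c ∈ S, 1 ≤ c.1 ∧ c.1 ≤ mm ∧ 1 ≤ c.2) {P0 : Finset (ℕ × ℕ)}
    (hP0 : P0 ∈ placements S k) {b : ℕ} (hb : b ∈ freeCols mm P0) :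
    insert (b, 1) (P0.image shV) ∈ placements (botRow mm ∪ S.image shV) (k + 1) := by
  obtain ⟨hPB, hcard, hna⟩ := mem_placements.1 hP0
  simp only [freeCols, Finset.mem_sdiff, Finset.mem_Icc, Finset.mem_image] at hb
  have hb1 : (b, 1) ∉ P0.image shV := by
    intro hmem
    obtain ⟨d, hd, hd1⟩ := Finset.mem_image.1 hmem
    have := hS d (hPB hd)
    simp only [shV, Prod.ext_iff] at hd1
    omega
  refine mem_placements.2 ⟨?_, ?_, ?_⟩
  · intro c hc
    rcases Finset.mem_insert.1 hc with rfl | hc'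
    · exact Finset.mem_union_left _ (mem_botRow.2 ⟨hb.1.1, hb.1.2, rfl⟩)
    · exact Finset.mem_union_right _ (Finset.image_subset_image hPB hc')
  · rw [Finset.card_insert_of_notMem hb1, Finset.card_image_of_injective _ shV_inj, hcard]
  · intro c hc d hd hne
    rcases Finset.mem_insert.1 hc with rfl | hc' <;> rcases Finset.mem_insert.1 hd with rfl | hd'
    · exact absurd rfl hne
    · obtain ⟨a, ha, rfl⟩ := Finset.mem_image.1 hd'
      have := hS a (hPB ha)
      have hfa : a.1 ≠ b := fun h => hb.2 ⟨a, ha, h⟩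
      simp only [shV]
      constructor <;> simp <;> omega
    · obtain ⟨a, ha, rfl⟩ := Finset.mem_image.1 hc'
      have := hS a (hPB ha)
      have hfa : a.1 ≠ b := fun h => hb.2 ⟨a, ha, h⟩
      simp only [shV]
      constructor <;> simp <;> omega
    · obtain ⟨a, ha, rfl⟩ := Finset.mem_image.1 hc'
      obtain ⟨a', ha', rfl⟩ := Finset.mem_image.1 hd'
      have haa : a ≠ a' := fun h => hne (by rw [h])
      have := hna a ha a' ha' haa
      simp only [shV]
      constructor <;> simp <;> omega

lemma partB {A : Type*} [CommRing A] (w : ℕ → ℕ → A)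
    (hS : ∀ c ∈ S, 1 ≤ c.1 ∧ c.1 ≤ mm ∧ 1 ≤ c.2) (k : ℕ) :
    ∑ P ∈ (placements (botRow mm ∪ S.image shV) (k + 1)).filter
        (fun P => ¬ ∀ r ∈ P, r.2 ≠ 1),
        ∏ c ∈ uncancelled (botRow mm ∪ S.image shV) P, w (c.1 - nwCount P c) c.2
      = (∑ P ∈ placements S k, ∏ c ∈ uncancelled S P, w (c.1 - nwCount P c) (c.2 + 1))
          * (∑ q ∈ Finset.range (mm - k), wcol w q) := by
  classical
  rw [Finset.sum_mul]
  have hper : ∀ P0 ∈ placements S k,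
      (∏ c ∈ uncancelled S P0, w (c.1 - nwCount P0 c) (c.2 + 1))
          * (∑ q ∈ Finset.range (mm - k), wcol w q)
      = ∑ b ∈ freeCols mm P0,
          (∏ c ∈ uncancelled S P0, w (c.1 - nwCount P0 c) (c.2 + 1))
            * wcol w (((freeCols mm P0).filter (· < b)).card) := by
    intro P0 hP0
    rw [← Finset.mul_sum]
    congr 1
    have h1 : ∀ b ∈ freeCols mm P0,
        wcol w (((freeCols mm P0).filter (· < b)).card)
          = (fun u => wcol w (u - 1)) (((freeCols mm P0).filter (· ≤ b)).card) := by
      intro b hb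
      rw [filter_le_card hb]
      simp
    have h2 := Finset.sum_image (s := freeCols mm P0)
      (g := fun b => ((freeCols mm P0).filter (· ≤ b)).card)
      (f := fun u => wcol w (u - 1)) (fun a ha b hb h => rank_injOn _ a ha b hb h)
    rw [Finset.sum_congr rfl h1, ← h2, rank_image, freeCols_card hP0 hS, sum_Icc_pred]
  rw [Finset.sum_congr rfl hper, ← Finset.sum_sigma (placements S k) (fun P0 => freeCols mm P0)
    (fun x => (∏ c ∈ uncancelled S x.1, w (c.1 - nwCount x.1 c) (c.2 + 1))
      * wcol w (((freeCols mm x.1).filter (· < x.2)).card))]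
  refine (Finset.sum_nbij' (i := fun x => insert (x.2, 1) (x.1.image shV))
    (j := fun Q => ⟨(Q.filter (fun r => r.2 ≠ 1)).image unV,
      (Q.filter (fun r => r.2 = 1)).sum Prod.fst⟩) ?_ ?_ ?_ ?_ ?_).symm
  · rintro ⟨P0, b⟩ hx
    rw [Finset.mem_sigma] at hx
    rw [Finset.mem_filter]
    refine ⟨placementsB hS hx.1 hx.2, ?_⟩
    push_neg
    exact ⟨(b, 1), Finset.mem_insert_self _ _, rfl⟩
  · intro Q hQ
    rw [Finset.mem_filter] at hQ
    obtain ⟨hQpl, hQnb⟩ := hQ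
    obtain ⟨hQB, hcard, hna⟩ := mem_placements.1 hQpl
    push_neg at hQnb
    obtain ⟨b0, hb0Q, hb02⟩ := hQnb
    have huniq := bottom_unique hQpl hb0Q hb02
    have hb0bot : 1 ≤ b0.1 ∧ b0.1 ≤ mm := by
      rcases Finset.mem_union.1 (hQB hb0Q) with h | h
      · have := mem_botRow.1 h; exact ⟨this.1, this.2.1⟩
      · obtain ⟨d, hd, rfl⟩ := Finset.mem_image.1 h
        have := hS d hd
        simp only [shV] at hb02
        omega
    have herase : Q.filter (fun r => r.2 ≠ 1) = Q.erase b0 := by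
      ext r
      simp only [Finset.mem_filter, Finset.mem_erase]
      constructor
      · rintro ⟨hr, hr2⟩
        refine ⟨?_, hr⟩
        rintro rfl; exact hr2 hb02
      · rintro ⟨hne, hr⟩
        refine ⟨hr, ?_⟩
        intro hr2
        have : r ∈ Q.filter (fun r => r.2 = 1) := Finset.mem_filter.2 ⟨hr, hr2⟩
        rw [huniq, Finset.mem_singleton] at this
        exact hne this
    have hQ1 : ∀ q ∈ Q.erase b0, ∃ d ∈ S, q = shV d := by
      intro q hq
      rcases Finset.mem_union.1 (hQB (Finset.mem_of_mem_erase hq)) with h | h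
      · exfalso
        have h2 := (mem_botRow.1 h).2.2
        have : q ∈ Q.filter (fun r => r.2 = 1) :=
          Finset.mem_filter.2 ⟨Finset.mem_of_mem_erase hq, h2⟩
        rw [huniq, Finset.mem_singleton] at this
        exact (Finset.ne_of_mem_erase hq) this
      · obtain ⟨d, hd, rfl⟩ := Finset.mem_image.1 h
        exact ⟨d, hd, rfl⟩
    have hQ2 : ∀ q ∈ Q.erase b0, 2 ≤ q.2 ∧ shV (unV q) = q := by
      intro q hq
      obtain ⟨d, hd, rfl⟩ := hQ1 q hq
      have := hS d hd
      exact ⟨by simp only [shV]; omega, by simp [shV, unV]⟩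
    rw [Finset.mem_sigma]
    constructor
    · rw [herase]
      refine mem_placements.2 ⟨?_, ?_, ?_⟩
      · intro c hc
        obtain ⟨q, hq, rfl⟩ := Finset.mem_image.1 hc
        obtain ⟨d, hd, rfl⟩ := hQ1 q hq
        simpa [unV, shV] using hd
      · have hinj : ∀ a ∈ Q.erase b0, ∀ b ∈ Q.erase b0, unV a = unV b → a = b := by
          intro a ha b hb hab
          rw [← (hQ2 a ha).2, ← (hQ2 b hb).2, hab]
        rw [Finset.card_image_of_injOn hinj, Finset.card_erase_of_mem hb0Q, hcard]
        omega
      · intro c hc d hd hne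
        obtain ⟨q, hq, rfl⟩ := Finset.mem_image.1 hc
        obtain ⟨q', hq', rfl⟩ := Finset.mem_image.1 hd
        have hqq : q ≠ q' := fun h => hne (by rw [h])
        have := hna q (Finset.mem_of_mem_erase hq) q' (Finset.mem_of_mem_erase hq') hqq
        have h1 := (hQ2 q hq).1
        have h2 := (hQ2 q' hq').1
        simp only [unV] at *
        constructor <;> omega
    · show (Q.filter (fun r => r.2 = 1)).sum Prod.fst ∈ freeCols mm _
      rw [huniq, Finset.sum_singleton, freeCols, Finset.mem_sdiff, Finset.mem_Icc]
      refine ⟨hb0bot, ?_⟩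
      rw [Finset.mem_image]
      rintro ⟨d, hd, hd1⟩
      rw [herase] at hd
      obtain ⟨q, hq, rfl⟩ := Finset.mem_image.1 hd
      have hqb : q ≠ b0 := Finset.ne_of_mem_erase hq
      have := (hna q (Finset.mem_of_mem_erase hq) b0 hb0Q hqb).1
      simp only [unV] at hd1
      exact this hd1
  · rintro ⟨P0, b⟩ hx
    rw [Finset.mem_sigma] at hx
    obtain ⟨hP0, hb⟩ := hx
    obtain ⟨hPB, hcard, hna⟩ := mem_placements.1 hP0
    have hall : ∀ r ∈ P0.image shV, r.2 ≠ 1 := by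
      intro r hr
      obtain ⟨d, hd, rfl⟩ := Finset.mem_image.1 hr
      have := hS d (hPB hd)
      simp only [shV]
      omega
    have h1 : (insert (b, 1) (P0.image shV)).filter (fun r => r.2 ≠ 1) = P0.image shV := by
      rw [Finset.filter_insert, if_neg (by simp), Finset.filter_true_of_mem hall]
    have h2 : (insert (b, 1) (P0.image shV)).filter (fun r => r.2 = 1) = {(b, 1)} := by
      rw [Finset.filter_insert, if_pos rfl, Finset.filter_false_of_mem
        (fun r hr => hall r hr)]
      rfl
    show (⟨_, _⟩ : (_ : Finset (ℕ × ℕ)) × ℕ) = _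
    rw [h1, h2, Finset.sum_singleton, image_image_id (fun a _ => by simp [shV, unV])]
  · intro Q hQ
    dsimp only
    rw [Finset.mem_filter] at hQ
    obtain ⟨hQpl, hQnb⟩ := hQ
    obtain ⟨hQB, hcard, hna⟩ := mem_placements.1 hQpl
    push_neg at hQnb
    obtain ⟨b0, hb0Q, hb02⟩ := hQnb
    have huniq := bottom_unique hQpl hb0Q hb02
    have herase : Q.filter (fun r => r.2 ≠ 1) = Q.erase b0 := by
      ext r
      simp only [Finset.mem_filter, Finset.mem_erase]
      constructor
      · rintro ⟨hr, hr2⟩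
        refine ⟨?_, hr⟩
        rintro rfl; exact hr2 hb02
      · rintro ⟨hne, hr⟩
        refine ⟨hr, ?_⟩
        intro hr2
        have : r ∈ Q.filter (fun r => r.2 = 1) := Finset.mem_filter.2 ⟨hr, hr2⟩
        rw [huniq, Finset.mem_singleton] at this
        exact hne this
    have hQ2 : ∀ q ∈ Q.erase b0, shV (unV q) = q := by
      intro q hq
      rcases Finset.mem_union.1 (hQB (Finset.mem_of_mem_erase hq)) with h | h
      · exfalso
        have h2 := (mem_botRow.1 h).2.2
        have : q ∈ Q.filter (fun r => r.2 = 1) :=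
          Finset.mem_filter.2 ⟨Finset.mem_of_mem_erase hq, h2⟩
        rw [huniq, Finset.mem_singleton] at this
        exact (Finset.ne_of_mem_erase hq) this
      · obtain ⟨d, hd, rfl⟩ := Finset.mem_image.1 h
        have := hS d hd
        simp [shV, unV]
    show insert _ _ = Q
    have him : Finset.image (shV ∘ unV) (Q.erase b0) = Q.erase b0 :=
      (Finset.image_congr (fun a ha => hQ2 a ha)).trans Finset.image_id
    rw [huniq, Finset.sum_singleton, herase, Finset.image_image, him]
    have : (b0.1, 1) = b0 := Prod.ext rfl hb02.symm
    rw [this, Finset.insert_erase hb0Q]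
  · rintro ⟨P0, b⟩ hx
    rw [Finset.mem_sigma] at hx
    exact (prodB w hS hx.1 hx.2).symm

end PartB2
-- ## vanishing helpers

lemma placements_empty {B : Finset (ℕ × ℕ)} {k : ℕ}
    (h : (B.image Prod.fst).card < k ∨ (B.image Prod.snd).card < k) :
    placements B k = ∅ := by
  rw [Finset.eq_empty_iff_forall_notMem]
  intro P hP
  rcases h with h | h
  · exact absurd (placements_le_fst hP) (by omega)
  · exact absurd (placements_le_snd hP) (by omega)

lemma rookPoly_zero' {A : Type*} [CommRing A] (w : ℕ → ℕ → A) {B : Finset (ℕ × ℕ)} {k : ℕ}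
    (h : (B.image Prod.fst).card < k ∨ (B.image Prod.snd).card < k) :
    rookPoly w B k = 0 := by
  rw [rookPoly, placements_empty h, Finset.sum_empty]

lemma boardOf_fst_card (α : List Bool) :
    ((boardOf α).image Prod.fst).card ≤ α.count true := by
  have h : (boardOf α).image Prod.fst ⊆ Finset.Icc 1 (α.count true) := by
    intro a ha
    obtain ⟨c, hc, rfl⟩ := Finset.mem_image.1 ha
    have := boardOf_bounds hc
    rw [Finset.mem_Icc]; omega
  have := Finset.card_le_card h
  rw [Nat.card_Icc] at this
  omega

lemma boardOf_snd_card (α : List Bool) :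
    ((boardOf α).image Prod.snd).card ≤ α.count false := by
  have h : (boardOf α).image Prod.snd ⊆ Finset.Icc 1 (α.count false) := by
    intro a ha
    obtain ⟨c, hc, rfl⟩ := Finset.mem_image.1 ha
    have := boardOf_bounds hc
    rw [Finset.mem_Icc]; omega
  have := Finset.card_le_card h
  rw [Nat.card_Icc] at this
  omega

lemma boardOf_cons_true' (α : List Bool) :
    boardOf (true :: α) = (boardOf α).image shH := boardOf_cons_true α

lemma boardOf_cons_false' (α : List Bool) :
    boardOf (false :: α) = botRow (α.count true) ∪ (boardOf α).image shV :=
  boardOf_cons_false α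

lemma boardOf_consTrue_fst_card (α : List Bool) :
    ((boardOf (true :: α)).image Prod.fst).card ≤ α.count true := by
  have h1 : (boardOf (true :: α)).image Prod.fst
      = ((boardOf α).image Prod.fst).image (· + 1) := by
    rw [boardOf_cons_true', Finset.image_image, Finset.image_image]
    rfl
  rw [h1, Finset.card_image_of_injective _ (fun a b h => by omega)]
  exact boardOf_fst_card α

lemma boardOf_consFalse_fst_card (α : List Bool) :
    ((boardOf (false :: α)).image Prod.fst).card ≤ α.count true := by
  have h := boardOf_fst_card (false :: α)
  have : (false :: α).count true = α.count true := by simp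
  omega

lemma partB0 {A : Type*} [CommRing A] (w : ℕ → ℕ → A) (B : Finset (ℕ × ℕ)) :
    ∑ P ∈ (placements B 0).filter (fun P => ¬ ∀ r ∈ P, r.2 ≠ 1),
        ∏ c ∈ uncancelled B P, w (c.1 - nwCount P c) c.2 = 0 := by
  have h : (placements B 0).filter (fun P => ¬ ∀ r ∈ P, r.2 ≠ 1) = ∅ := by
    rw [Finset.filter_eq_empty_iff]
    intro P hP
    have : P = ∅ := Finset.card_eq_zero.1 (mem_placements.1 hP).2.1
    subst this
    simp
  rw [h, Finset.sum_empty]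
theorem stmt19 {A R : Type*} [CommRing A] [Ring R]
    (w : ℕ → ℕ → A) (ι : A →+* R) (x y : R)
    (hyx : y * x = ι (w 1 1) * (x * y) + 1)
    (hx : ∀ s t : ℕ, x * ι (w s t) = ι (w (s + 1) t) * x)
    (hy : ∀ s t : ℕ, y * ι (w s t) = ι (w s (t + 1)) * y)
    (α : List Bool) :
    (α.map (fun c => if c then x else y)).prod =
      ∑ k ∈ Finset.range (min (α.count true) (α.count false) + 1),
        ι (rookPoly w (boardOf α) k) * x ^ (α.count true - k) * y ^ (α.count false - k) := by
  induction α with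
  | nil =>
    have h0 : placements (boardOf []) 0 = {∅} := by
      ext P
      rw [mem_placements, boardOf_nil]
      simp [Finset.subset_empty, Finset.card_eq_zero]
      intro h
      subst h
      simp
    have h1 : rookPoly w (boardOf []) 0 = 1 := by
      rw [rookPoly, h0, Finset.sum_singleton]
      have : uncancelled (boardOf []) ∅ = ∅ := by
        rw [boardOf_nil]
        rfl
      rw [this, Finset.prod_empty]
    simp [h1]
  | cons c α' ih =>
    cases c with
    | true =>
      have hct : (true :: α').count true = α'.count true + 1 := by simp
      have hcf : (true :: α').count false = α'.count false := by simp
      rw [List.map_cons, List.prod_cons, ih, if_pos rfl, Finset.mul_sum, hct, hcf]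
      have hterm : ∀ k ∈ Finset.range (min (α'.count true) (α'.count false) + 1),
          x * (ι (rookPoly w (boardOf α') k) * x ^ (α'.count true - k)
            * y ^ (α'.count false - k))
          = ι (rookPoly w (boardOf (true :: α')) k) * x ^ (α'.count true + 1 - k)
            * y ^ (α'.count false - k) := by
        intro k hk
        rw [Finset.mem_range] at hk
        have hkm : k ≤ α'.count true := le_trans (Nat.lt_succ_iff.mp hk) (min_le_left _ _)
        have hxι : x * ι (rookPoly w (boardOf α') k)
            = ι (rookPoly w (boardOf (true :: α')) k) * x := by
          have h1 : x * ι (rookPoly w (boardOf α') k)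
              = ι (∑ P ∈ placements (boardOf α') k, ∏ c ∈ uncancelled (boardOf α') P,
                  w (c.1 - nwCount P c + 1) c.2) * x := by
            simp only [rookPoly]
            exact mul_iota_sum_prod w ι x (fun s t => s + 1) (fun s t => t) hx _ _ _ _
          rw [h1, boardOf_cons_true', partX w (fun c hc => (boardOf_bounds hc).1) k]
        calc x * (ι (rookPoly w (boardOf α') k) * x ^ (α'.count true - k)
              * y ^ (α'.count false - k))
            = (x * ι (rookPoly w (boardOf α') k)) * x ^ (α'.count true - k)
              * y ^ (α'.count false - k) := by
              rw [← mul_assoc, ← mul_assoc]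
          _ = ι (rookPoly w (boardOf (true :: α')) k) * (x * x ^ (α'.count true - k))
              * y ^ (α'.count false - k) := by
              rw [hxι, mul_assoc _ x _]
          _ = ι (rookPoly w (boardOf (true :: α')) k) * x ^ (α'.count true + 1 - k)
              * y ^ (α'.count false - k) := by
              have hexp : α'.count true - k + 1 = α'.count true + 1 - k := by omega
              rw [← pow_succ', hexp]
      rw [Finset.sum_congr rfl hterm]
      apply Finset.sum_subset
      · exact Finset.range_subset_range.2 (Nat.add_le_add_right
          (min_le_min (Nat.le_succ _) (le_refl _)) 1)
      · intro k hk hnk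
        rw [Finset.mem_range] at hk
        rw [Finset.mem_range] at hnk
        have hgt : min (α'.count true) (α'.count false) < k :=
          Nat.lt_of_succ_le (not_lt.1 hnk)
        have hz : rookPoly w (boardOf (true :: α')) k = 0 := by
          apply rookPoly_zero'
          rcases min_lt_iff.1 hgt with h | h
          · left
            have := boardOf_consTrue_fst_card α'
            omega
          · right
            have := boardOf_snd_card (true :: α')
            rw [hcf] at this
            omega
        rw [hz, map_zero, zero_mul, zero_mul]
    | false =>
      have hct : (false :: α').count true = α'.count true := by simp
      have hcf : (false :: α').count false = α'.count false + 1 := by simp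
      have hSb : ∀ c ∈ boardOf α', 1 ≤ c.1 ∧ c.1 ≤ α'.count true ∧ 1 ≤ c.2 := by
        intro c hc
        have := boardOf_bounds hc
        exact ⟨this.1, this.2.1, this.2.2.1⟩
      rw [List.map_cons, List.prod_cons, ih, if_neg Bool.false_ne_true, Finset.mul_sum,
        hct, hcf, boardOf_cons_false']
      have hterm : ∀ k ∈ Finset.range (min (α'.count true) (α'.count false) + 1),
          y * (ι (rookPoly w (boardOf α') k) * x ^ (α'.count true - k)
            * y ^ (α'.count false - k))
          = ι (∑ P ∈ (placements (botRow (α'.count true) ∪ (boardOf α').image shV) k).filter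
                (fun P => ∀ r ∈ P, r.2 ≠ 1),
              ∏ c ∈ uncancelled (botRow (α'.count true) ∪ (boardOf α').image shV) P,
                w (c.1 - nwCount P c) c.2)
              * x ^ (α'.count true - k) * y ^ (α'.count false + 1 - k)
            + ι (∑ P ∈ (placements (botRow (α'.count true) ∪ (boardOf α').image shV)
                  (k + 1)).filter (fun P => ¬ ∀ r ∈ P, r.2 ≠ 1),
                ∏ c ∈ uncancelled (botRow (α'.count true) ∪ (boardOf α').image shV) P,
                  w (c.1 - nwCount P c) c.2)
              * x ^ (α'.count true - (k + 1)) * y ^ (α'.count false + 1 - (k + 1)) := by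
        intro k hk
        rw [Finset.mem_range] at hk
        have hkm : k ≤ α'.count true := le_trans (Nat.lt_succ_iff.mp hk) (min_le_left _ _)
        have hkn : k ≤ α'.count false := le_trans (Nat.lt_succ_iff.mp hk) (min_le_right _ _)
        have hyι : y * ι (rookPoly w (boardOf α') k)
            = ι (∑ P ∈ placements (boardOf α') k, ∏ c ∈ uncancelled (boardOf α') P,
                w (c.1 - nwCount P c) (c.2 + 1)) * y := by
          simp only [rookPoly]
          exact mul_iota_sum_prod w ι y (fun s t => s) (fun s t => t + 1) hy _ _ _ _
        rw [partA w hSb k, partB w hSb k]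
        rw [← mul_assoc, ← mul_assoc, hyι, mul_assoc _ y _,
          y_mul_xpow w ι x y hyx hx (α'.count true - k), mul_add, add_mul]
        congr 1
        · -- first summand
          rw [map_mul, ← mul_assoc _ _ y, mul_assoc _ y _, ← pow_succ']
          have he1 : α'.count false + 1 - k = (α'.count false - k) + 1 := by omega
          rw [he1, ← mul_assoc]
        · -- second summand
          conv_rhs => rw [map_mul,
            map_sum ι (fun q => wcol w q) (Finset.range (α'.count true - k)),
            Finset.mul_sum, Finset.sum_mul, Finset.sum_mul]
          conv_lhs => rw [Finset.mul_sum, Finset.sum_mul]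
          apply Finset.sum_congr rfl
          intro q _
          rw [show α'.count true - (k + 1) = α'.count true - k - 1 from by omega,
            show α'.count false + 1 - (k + 1) = α'.count false - k from by omega,
            ← mul_assoc]
      rw [Finset.sum_congr rfl hterm, Finset.sum_add_distrib]
      have hplN : placements (boardOf α')
          (min (α'.count true) (α'.count false) + 1) = ∅ := by
        apply placements_empty
        rcases le_total (α'.count true) (α'.count false) with h | h
        · left
          have h1 := boardOf_fst_card α'
          have h2 : min (α'.count true) (α'.count false) = α'.count true := min_eq_left h
          omega
        · right
          have h1 := boardOf_snd_card α'
          have h2 : min (α'.count true) (α'.count false) = α'.count false := min_eq_right h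
          omega
      -- extend the first sum by a vanishing top term
      have hFsum : ∑ k ∈ Finset.range (min (α'.count true) (α'.count false) + 1),
          ι (∑ P ∈ (placements (botRow (α'.count true) ∪ (boardOf α').image shV) k).filter
                (fun P => ∀ r ∈ P, r.2 ≠ 1),
              ∏ c ∈ uncancelled (botRow (α'.count true) ∪ (boardOf α').image shV) P,
                w (c.1 - nwCount P c) c.2)
              * x ^ (α'.count true - k) * y ^ (α'.count false + 1 - k)
          = ∑ k ∈ Finset.range (min (α'.count true) (α'.count false) + 1 + 1),
          ι (∑ P ∈ (placements (botRow (α'.count true) ∪ (boardOf α').image shV) k).filter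
                (fun P => ∀ r ∈ P, r.2 ≠ 1),
              ∏ c ∈ uncancelled (botRow (α'.count true) ∪ (boardOf α').image shV) P,
                w (c.1 - nwCount P c) c.2)
              * x ^ (α'.count true - k) * y ^ (α'.count false + 1 - k) := by
        rw [Finset.sum_range_succ
          (n := min (α'.count true) (α'.count false) + 1)]
        rw [partA w hSb, hplN, Finset.sum_empty, zero_mul, map_zero, zero_mul, zero_mul,
          add_zero]
      -- shift the second sum
      have hGsum : ∑ k ∈ Finset.range (min (α'.count true) (α'.count false) + 1),
          ι (∑ P ∈ (placements (botRow (α'.count true) ∪ (boardOf α').image shV)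
                (k + 1)).filter (fun P => ¬ ∀ r ∈ P, r.2 ≠ 1),
              ∏ c ∈ uncancelled (botRow (α'.count true) ∪ (boardOf α').image shV) P,
                w (c.1 - nwCount P c) c.2)
              * x ^ (α'.count true - (k + 1)) * y ^ (α'.count false + 1 - (k + 1))
          = ∑ k ∈ Finset.range (min (α'.count true) (α'.count false) + 1 + 1),
          ι (∑ P ∈ (placements (botRow (α'.count true) ∪ (boardOf α').image shV) k).filter
                (fun P => ¬ ∀ r ∈ P, r.2 ≠ 1),
              ∏ c ∈ uncancelled (botRow (α'.count true) ∪ (boardOf α').image shV) P,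
                w (c.1 - nwCount P c) c.2)
              * x ^ (α'.count true - k) * y ^ (α'.count false + 1 - k) := by
        rw [Finset.sum_range_succ' _ (min (α'.count true) (α'.count false) + 1)]
        rw [partB0, map_zero, zero_mul, zero_mul, add_zero]
      rw [hFsum, hGsum, ← Finset.sum_add_distrib]
      have hcombine : ∀ k ∈ Finset.range (min (α'.count true) (α'.count false) + 1 + 1),
          (ι (∑ P ∈ (placements (botRow (α'.count true) ∪ (boardOf α').image shV) k).filter
                (fun P => ∀ r ∈ P, r.2 ≠ 1),
              ∏ c ∈ uncancelled (botRow (α'.count true) ∪ (boardOf α').image shV) P,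
                w (c.1 - nwCount P c) c.2)
              * x ^ (α'.count true - k) * y ^ (α'.count false + 1 - k)
            + ι (∑ P ∈ (placements (botRow (α'.count true) ∪ (boardOf α').image shV) k).filter
                (fun P => ¬ ∀ r ∈ P, r.2 ≠ 1),
              ∏ c ∈ uncancelled (botRow (α'.count true) ∪ (boardOf α').image shV) P,
                w (c.1 - nwCount P c) c.2)
              * x ^ (α'.count true - k) * y ^ (α'.count false + 1 - k))
          = ι (rookPoly w (botRow (α'.count true) ∪ (boardOf α').image shV) k)
              * x ^ (α'.count true - k) * y ^ (α'.count false + 1 - k) := by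
        intro k _
        rw [← add_mul, ← add_mul, ← map_add, rookPoly,
          Finset.sum_filter_add_sum_filter_not]
      rw [Finset.sum_congr rfl hcombine]
      refine (Finset.sum_subset ?_ ?_).symm
      · apply Finset.range_subset_range.2
        have h1 : min (α'.count true) (α'.count false + 1)
            ≤ min (α'.count true + 1) (α'.count false + 1) :=
          min_le_min (Nat.le_succ _) (le_refl _)
        have h2 : min (α'.count true + 1) (α'.count false + 1)
            = min (α'.count true) (α'.count false) + 1 := Nat.succ_min_succ _ _
        omega
      · intro k hk hnk
        rw [Finset.mem_range] at hk hnk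
        have hz : rookPoly w (botRow (α'.count true) ∪ (boardOf α').image shV) k = 0 := by
          rw [← boardOf_cons_false']
          apply rookPoly_boardOf_eq_zero
          rw [hct, hcf]
          omega
        rw [hz, map_zero, zero_mul, zero_mul]
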